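/- The set of nonzero integer vectors lying in the profile of the Gröbner cone C = cone((1,0,0), (0,1,0), (3,4,6)) of the E₆-singularity, i.e. the set of nonzero (a,b,c) ∈ ℤ³ that lie in C and satisfy a + b − c ≤ 1, is exactly {(1,0,0), (0,1,0), (3,4,6), (1,1,1), (1,2,2), (2,2,3), (2,3,4)}. -/

import Mathlib

/-- The cone generated by three vectors in `ℝ³`. -/
def coneGen3 (v₁ v₂ v₃ : Fin 3 → ℝ) : Set (Fin 3 → ℝ) :=
  {w | ∃ a b c : ℝ, 0 ≤ a ∧ 0 ≤ b ∧ 0 ≤ c ∧ w = a • v₁ + b • v₂ + c • v₃}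

lemma eq3 (v : Fin 3 → ℤ) (x y z : ℤ) (h0 : v 0 = x) (h1 : v 1 = y) (h2 : v 2 = z) :
    v = ![x, y, z] := by
  funext i; fin_cases i <;> simpa

lemma mem_cone_of (v : Fin 3 → ℤ) (a b c : ℝ) (ha : 0 ≤ a) (hb : 0 ≤ b) (hc : 0 ≤ c)
    (h0 : (v 0 : ℝ) = a + c * 3) (h1 : (v 1 : ℝ) = b + c * 4) (h2 : (v 2 : ℝ) = c * 6) :
    (fun i => (v i : ℝ)) ∈ coneGen3 ![1, 0, 0] ![0, 1, 0] ![3, 4, 6] := by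
  refine ⟨a, b, c, ha, hb, hc, funext fun i => ?_⟩
  fin_cases i <;> simp <;> linarith

set_option maxHeartbeats 1600000 in
/-- The nonzero integer points of the profile of the Gröbner cone
`cone((1,0,0), (0,1,0), (3,4,6))` of the `E₆`-singularity (the points of the cone
with `x + y - z ≤ 1`). -/
theorem E6_profile_points_z2 :
    {v : Fin 3 → ℤ | v ≠ 0 ∧
        (fun i => (v i : ℝ)) ∈ coneGen3 ![1, 0, 0] ![0, 1, 0] ![3, 4, 6] ∧
        v 0 + v 1 - v 2 ≤ 1} =
      {![1, 0, 0], ![0, 1, 0], ![3, 4, 6], ![1, 1, 1], ![1, 2, 2], ![2, 2, 3],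
        ![2, 3, 4]} := by
  ext v
  simp only [Set.mem_setOf_eq, Set.mem_insert_iff, Set.mem_singleton_iff]
  constructor
  · rintro ⟨hne, ⟨a, b, c, ha, hb, hc, hw⟩, hle⟩
    have e0 := congrFun hw 0
    have e1 := congrFun hw 1
    have e2 := congrFun hw 2
    simp only [Pi.add_apply, Pi.smul_apply, Matrix.cons_val_zero, Matrix.cons_val_one,
      Matrix.head_cons, smul_eq_mul, Matrix.cons_val] at e0 e1 e2
    norm_num at e0 e1 e2
    have i2 : (0 : ℤ) ≤ v 2 := by
      have : (0:ℝ) ≤ (v 2 : ℝ) := by nlinarith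
      exact_mod_cast this
    have i1 : 2 * v 2 ≤ 3 * v 1 := by
      have : 2 * (v 2 : ℝ) ≤ 3 * (v 1 : ℝ) := by nlinarith
      exact_mod_cast this
    have i0 : v 2 ≤ 2 * v 0 := by
      have : (v 2 : ℝ) ≤ 2 * (v 0 : ℝ) := by nlinarith
      exact_mod_cast this
    have hne' : ¬(v 0 = 0 ∧ v 1 = 0 ∧ v 2 = 0) := fun ⟨h0, h1, h2⟩ =>
      hne (funext fun i => by fin_cases i <;> simpa)
    have key : (v 0 = 1 ∧ v 1 = 0 ∧ v 2 = 0) ∨ (v 0 = 0 ∧ v 1 = 1 ∧ v 2 = 0) ∨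
        (v 0 = 3 ∧ v 1 = 4 ∧ v 2 = 6) ∨ (v 0 = 1 ∧ v 1 = 1 ∧ v 2 = 1) ∨
        (v 0 = 1 ∧ v 1 = 2 ∧ v 2 = 2) ∨ (v 0 = 2 ∧ v 1 = 2 ∧ v 2 = 3) ∨
        (v 0 = 2 ∧ v 1 = 3 ∧ v 2 = 4) := by omega
    rcases key with ⟨h0,h1,h2⟩|⟨h0,h1,h2⟩|⟨h0,h1,h2⟩|⟨h0,h1,h2⟩|⟨h0,h1,h2⟩|⟨h0,h1,h2⟩|⟨h0,h1,h2⟩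
    · exact Or.inl (eq3 v _ _ _ h0 h1 h2)
    · exact Or.inr (Or.inl (eq3 v _ _ _ h0 h1 h2))
    · exact Or.inr (Or.inr (Or.inl (eq3 v _ _ _ h0 h1 h2)))
    · exact Or.inr (Or.inr (Or.inr (Or.inl (eq3 v _ _ _ h0 h1 h2))))
    · exact Or.inr (Or.inr (Or.inr (Or.inr (Or.inl (eq3 v _ _ _ h0 h1 h2)))))
    · exact Or.inr (Or.inr (Or.inr (Or.inr (Or.inr (Or.inl (eq3 v _ _ _ h0 h1 h2))))))
    · exact Or.inr (Or.inr (Or.inr (Or.inr (Or.inr (Or.inr (eq3 v _ _ _ h0 h1 h2))))))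
  · rintro (rfl | rfl | rfl | rfl | rfl | rfl | rfl) <;>
      refine ⟨by decide, ?_, by norm_num [Matrix.cons_val_two, Matrix.tail_cons, Matrix.head_cons]⟩
    · exact mem_cone_of _ 1 0 0 (by norm_num) le_rfl le_rfl (by norm_num) (by norm_num) (by norm_num [Matrix.cons_val_two, Matrix.tail_cons, Matrix.head_cons])
    · exact mem_cone_of _ 0 1 0 le_rfl (by norm_num) le_rfl (by norm_num) (by norm_num) (by norm_num [Matrix.cons_val_two, Matrix.tail_cons, Matrix.head_cons])
    · exact mem_cone_of _ 0 0 1 le_rfl le_rfl (by norm_num) (by norm_num) (by norm_num) (by norm_num [Matrix.cons_val_two, Matrix.tail_cons, Matrix.head_cons])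
    · exact mem_cone_of _ (1/2) (1/3) (1/6) (by norm_num) (by norm_num) (by norm_num) (by norm_num) (by norm_num) (by norm_num [Matrix.cons_val_two, Matrix.tail_cons, Matrix.head_cons])
    · exact mem_cone_of _ 0 (2/3) (1/3) le_rfl (by norm_num) (by norm_num) (by norm_num) (by norm_num) (by norm_num [Matrix.cons_val_two, Matrix.tail_cons, Matrix.head_cons])
    · exact mem_cone_of _ (1/2) 0 (1/2) (by norm_num) le_rfl (by norm_num) (by norm_num) (by norm_num) (by norm_num [Matrix.cons_val_two, Matrix.tail_cons, Matrix.head_cons])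
    · exact mem_cone_of _ 0 (1/3) (2/3) le_rfl (by norm_num) (by norm_num) (by norm_num) (by norm_num) (by norm_num [Matrix.cons_val_two, Matrix.tail_cons, Matrix.head_cons])
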